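/- Let M be a monomial ideal with lcm-lattice L_M and let m ≠ 1 in L_M. For each element m' ≠ 1 of L_M covered by m let A_{m'} be its atom-support, and let Δ_m be the simplicial complex on vertex set A_m whose facets are the A_{m'} for m' covered by m. Then for all i ≥ rk(m), the reduced homology H̃_{i−1}(Δ_m; k) vanishes. -/

import Mathlib

open scoped Classical

noncomputable section

/-- The faces of cardinality `c` of a simplicial complex `Δ` on vertex set `Fin r`
(encoded as a finite set of finite subsets of `Fin r`). -/
abbrev Face {r : ℕ} (Δ : Finset (Finset (Fin r))) (c : ℕ) : Type :=
  {s : Finset (Fin r) // s ∈ Δ ∧ s.card = c}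

/-- The incidence sign of a codimension-one pair of faces: `(−1)^{position}` if
`t ⊆ s`, and `0` otherwise. -/
def bdryCoef (k : Type*) [Field k] {r : ℕ} (s t : Finset (Fin r)) : k :=
  if t ⊆ s then (-1 : k) ^ ((s \ t).sum fun v => (s.filter fun w => w < v).card) else 0

/-- The boundary map of the (augmented, reduced) simplicial chain complex of `Δ` with
coefficients in `k`, from chains on faces of cardinality `c + 1` (dimension `c`) to
chains on faces of cardinality `c`. -/
def bdry (k : Type*) [Field k] {r : ℕ} (Δ : Finset (Finset (Fin r))) (c : ℕ) :
    (Face Δ (c + 1) → k) →ₗ[k] (Face Δ c → k) :=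
  LinearMap.pi fun t => ∑ s : Face Δ (c + 1), bdryCoef k s.1 t.1 • LinearMap.proj s

/-- Nonvanishing of the reduced homology `H̃_{c−1}(Δ; k)`, i.e. of the homology of the
reduced chain complex at the chains on faces of cardinality `c` (dimension `c − 1`). -/
def HtNonzero (k : Type*) [Field k] {r : ℕ} (Δ : Finset (Finset (Fin r))) : ℕ → Prop
  | 0 => LinearMap.range (bdry k Δ 0) ≠ ⊤
  | c + 1 => LinearMap.ker (bdry k Δ c) ≠ LinearMap.range (bdry k Δ (c + 1))

/-- The atom-support of a multidegree: the indices of generators dividing it. -/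
def aSupp {n r : ℕ} (a : Fin r → (Fin n → ℕ)) (v : Fin n → ℕ) : Finset (Fin r) :=
  Finset.univ.filter fun i => a i ≤ v

/-- The lcm-lattice of the monomial ideal generated by the monomials with exponent
vectors `a i`: all joins (componentwise sups) of subsets of the generators. -/
def latticeL {n r : ℕ} (a : Fin r → (Fin n → ℕ)) : Set (Fin n → ℕ) :=
  {v | ∃ A : Finset (Fin r), v = A.sup a}

/-- `u` is covered by `v` in the lcm-lattice. -/
def covIn {n r : ℕ} (a : Fin r → (Fin n → ℕ)) (u v : Fin n → ℕ) : Prop :=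
  u ∈ latticeL a ∧ u < v ∧ ∀ w ∈ latticeL a, ¬(u < w ∧ w < v)

/-- The simplicial complex `Δ_m` at `m ≠ 1` in the lcm-lattice: the complex whose
facets are the supports `A_{m'}` of the elements `m'` covered by `m` (this is `{∅}`
when `m` is an atom, since then the only covered element is the bottom `1`). -/
def deltaM {n r : ℕ} (a : Fin r → (Fin n → ℕ)) (m : Fin n → ℕ) :
    Finset (Finset (Fin r)) :=
  Finset.univ.filter fun s => ∃ u, covIn a u m ∧ s ⊆ aSupp a u

/-- The rank of `m` in the lcm-lattice: the maximal length of chains from the bottom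
element (exponent vector `0`, the monomial `1`) to `m`. -/
def rkOf {n r : ℕ} (a : Fin r → (Fin n → ℕ)) (m : Fin n → ℕ) : ℕ :=
  sSup {K : ℕ | ∃ c : Fin (K + 1) → (Fin n → ℕ),
    StrictMono c ∧ (∀ j, c j ∈ latticeL a) ∧ c 0 = 0 ∧ c (Fin.last K) = m}

end


noncomputable section Aux
open Finset

variable {k : Type*} [Field k] {n r : ℕ} {a : Fin r → (Fin n → ℕ)} {m : Fin n → ℕ}

/-! ### Sign lemmas -/

lemma coef_subset {s t : Finset (Fin r)} (h : bdryCoef k s t ≠ 0) : t ⊆ s := by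
  by_contra hc; exact h (if_neg hc)

lemma coef_erase {s : Finset (Fin r)} {v : Fin r} (hv : v ∈ s) :
    bdryCoef k s (s.erase v) = (-1 : k) ^ ((s.filter fun w => w < v).card) := by
  rw [bdryCoef, if_pos (Finset.erase_subset _ _), Finset.sdiff_erase_self hv,
    Finset.sum_singleton]

lemma coef_sq {s : Finset (Fin r)} {v : Fin r} (hv : v ∈ s) :
    bdryCoef k s (s.erase v) * bdryCoef k s (s.erase v) = 1 := by
  rw [coef_erase hv, ← mul_pow]; norm_num

lemma pos_erase_not_lt {s : Finset (Fin r)} {y v : Fin r} (h : ¬ y < v) :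
    (((s.erase y).filter fun w => w < v).card) = ((s.filter fun w => w < v).card) := by
  rw [Finset.filter_erase, Finset.erase_eq_of_notMem]
  intro hy; exact h (Finset.mem_filter.mp hy).2

lemma pos_erase_lt {s : Finset (Fin r)} {y v : Fin r} (hy : y ∈ s) (h : y < v) :
    ((s.filter fun w => w < v).card) = (((s.erase y).filter fun w => w < v).card) + 1 := by
  rw [Finset.filter_erase]
  have hmem : y ∈ s.filter (fun w => w < v) := Finset.mem_filter.mpr ⟨hy, h⟩
  exact (Finset.card_erase_add_one hmem).symm

private lemma pow_aux {A B : ℕ} : (-1 : k) ^ (A + (B + 1)) = -((-1 : k) ^ (B + A)) := by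
  rw [show A + (B + 1) = (B + A) + 1 by omega, pow_succ]; ring

private lemma pow_aux2 {A B : ℕ} : (-1 : k) ^ ((A + 1) + B) = -((-1 : k) ^ (B + A)) := by
  rw [show (A + 1) + B = (B + A) + 1 by omega, pow_succ]; ring

lemma coef_diamond {S : Finset (Fin r)} {x v : Fin r} (hx : x ∈ S) (hv : v ∈ S)
    (hne : x ≠ v) :
    bdryCoef k S (S.erase x) * bdryCoef k S (S.erase v)
      = -(bdryCoef k (S.erase x) ((S.erase x).erase v)
          * bdryCoef k (S.erase v) ((S.erase v).erase x)) := by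
  have hvx : v ∈ S.erase x := Finset.mem_erase.mpr ⟨hne.symm, hv⟩
  have hxv : x ∈ S.erase v := Finset.mem_erase.mpr ⟨hne, hx⟩
  rw [coef_erase hx, coef_erase hv, coef_erase hvx, coef_erase hxv,
    ← pow_add, ← pow_add]
  rcases hne.lt_or_gt with hlt | hlt
  · rw [pos_erase_lt hx hlt, pos_erase_not_lt (fun h => absurd (h.trans hlt) (lt_irrefl _)),
      pow_aux]
  · rw [pos_erase_lt hv hlt, pos_erase_not_lt (fun h => absurd (h.trans hlt) (lt_irrefl _)),
      pow_aux2]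

/-! ### Sums over faces -/

lemma deltaM_down {s t : Finset (Fin r)} (hs : s ∈ deltaM a m) (hts : t ⊆ s) :
    t ∈ deltaM a m := by
  simp only [deltaM, Finset.mem_filter, Finset.mem_univ, true_and] at hs ⊢
  obtain ⟨u, hu, hsu⟩ := hs
  exact ⟨u, hu, hts.trans hsu⟩

/-- The finset of faces of `Δ_m` of cardinality `c`. -/
def FF (a : Fin r → (Fin n → ℕ)) (m : Fin n → ℕ) (c : ℕ) : Finset (Finset (Fin r)) :=
  Finset.univ.filter (fun s => s ∈ deltaM a m ∧ s.card = c)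

lemma mem_FF {c : ℕ} {s : Finset (Fin r)} :
    s ∈ FF a m c ↔ s ∈ deltaM a m ∧ s.card = c := by simp [FF]

/-- Extension of a chain to all finsets. -/
def extCh (c : ℕ) (z : Face (deltaM a m) c → k) : Finset (Fin r) → k :=
  fun s => if h : s ∈ deltaM a m ∧ s.card = c then z ⟨s, h⟩ else 0

lemma extCh_spec {c : ℕ} (z : Face (deltaM a m) c → k) (s : Face (deltaM a m) c) :
    extCh c z s.1 = z s := by
  rw [extCh, dif_pos s.2]

lemma extCh_supp {c : ℕ} (z : Face (deltaM a m) c → k) {s : Finset (Fin r)}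
    (h : extCh c z s ≠ 0) : s ∈ deltaM a m ∧ s.card = c := by
  by_contra hc; exact h (dif_neg hc)

lemma bdry_apply (c : ℕ) (z : Face (deltaM a m) (c + 1) → k) (t : Face (deltaM a m) c) :
    bdry k (deltaM a m) c z t
      = ∑ s : Face (deltaM a m) (c + 1), bdryCoef k s.1 t.1 * z s := by
  simp [bdry, LinearMap.pi_apply, smul_eq_mul]

lemma bdry_apply' (c : ℕ) (z : Face (deltaM a m) (c + 1) → k) (t : Face (deltaM a m) c) :
    bdry k (deltaM a m) c z t
      = ∑ s ∈ FF a m (c + 1), bdryCoef k s t.1 * extCh (c + 1) z s := by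
  rw [bdry_apply]
  rw [show (∑ s : Face (deltaM a m) (c + 1), bdryCoef k s.1 t.1 * z s)
      = ∑ s : Face (deltaM a m) (c + 1), bdryCoef k s.1 t.1 * extCh (c + 1) z s.1 from
    Finset.sum_congr rfl (fun s _ => by rw [extCh_spec])]
  exact (Finset.sum_subtype (FF a m (c + 1)) (fun x => mem_FF)
    (fun s => bdryCoef k s t.1 * extCh (c + 1) z s)).symm

/-- Master reindexing: a sum over faces of cardinality `c+1` supported between `t`
and a simplex `A` is a sum over vertices. -/
lemma sum_FF_insert {c : ℕ} {t A : Finset (Fin r)} (htA : t ⊆ A) (htc : t.card = c)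
    (hA : ∀ s : Finset (Fin r), s ⊆ A → s ∈ deltaM a m) (f : Finset (Fin r) → k)
    (hf : ∀ s ∈ FF a m (c + 1), f s ≠ 0 → t ⊆ s ∧ s ⊆ A) :
    ∑ s ∈ FF a m (c + 1), f s = ∑ x ∈ A \ t, f (insert x t) := by
  have hinj : ∀ x ∈ A \ t, ∀ y ∈ A \ t, insert x t = insert y t → x = y := by
    intro x hx y hy hxy
    have hxt := (Finset.mem_sdiff.mp hx).2
    have hmem : x ∈ insert y t := hxy ▸ Finset.mem_insert_self x t
    rcases Finset.mem_insert.mp hmem with h | h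
    · exact h
    · exact absurd h hxt
  have himg : (A \ t).image (fun x => insert x t) ⊆ FF a m (c + 1) := by
    intro s hs
    obtain ⟨x, hx, rfl⟩ := Finset.mem_image.mp hs
    obtain ⟨hxA, hxt⟩ := Finset.mem_sdiff.mp hx
    exact mem_FF.mpr ⟨hA _ (Finset.insert_subset hxA htA),
      by rw [Finset.card_insert_of_notMem hxt, htc]⟩
  rw [← Finset.sum_image hinj]
  apply (Finset.sum_subset himg ?_).symm
  intro s hsF hsimg
  by_contra hne
  obtain ⟨hts, hsA⟩ := hf s hsF hne
  obtain ⟨hsd, hcard⟩ := mem_FF.mp hsF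
  have hx1 : (s \ t).card = 1 := by rw [Finset.card_sdiff_of_subset hts, hcard, htc]; omega
  obtain ⟨x, hx⟩ := Finset.card_eq_one.mp hx1
  have hs_eq : s = insert x t := by
    have h2 := Finset.union_sdiff_of_subset hts
    rw [hx] at h2
    rw [← h2, Finset.union_comm, ← Finset.insert_eq]
  apply hsimg
  refine Finset.mem_image.mpr ⟨x, Finset.mem_sdiff.mpr ⟨?_, ?_⟩, hs_eq.symm⟩
  · exact hsA (by rw [hs_eq]; exact Finset.mem_insert_self x t)
  · have hxm : x ∈ s \ t := by rw [hx]; exact Finset.mem_singleton_self x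
    exact (Finset.mem_sdiff.mp hxm).2


/-! ### `∂∘∂ = 0` -/

lemma inner_dd {c : ℕ} {s t : Finset (Fin r)} (hs : s ∈ deltaM a m) (hsc : s.card = c + 2)
    (htc : t.card = c) :
    ∑ u ∈ FF a m (c + 1), bdryCoef k u t * bdryCoef k s u = 0 := by
  by_cases hts : t ⊆ s
  · have hcd : (s \ t).card = 2 := by rw [Finset.card_sdiff_of_subset hts, hsc, htc]; omega
    obtain ⟨v, w, hvw, hst⟩ := Finset.card_eq_two.mp hcd
    have hvsd : v ∈ s \ t := by rw [hst]; exact Finset.mem_insert_self _ _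
    have hwsd : w ∈ s \ t := by rw [hst]; simp
    have hvs : v ∈ s := (Finset.mem_sdiff.mp hvsd).1
    have hws : w ∈ s := (Finset.mem_sdiff.mp hwsd).1
    have ht_eq : t = (s.erase v).erase w := by
      have h2 : s \ (s \ t) = t := Finset.sdiff_sdiff_eq_self hts
      rw [hst] at h2
      rw [← h2]; ext y
      simp only [Finset.mem_erase, Finset.mem_sdiff, Finset.mem_insert, Finset.mem_singleton]
      tauto
    set u₁ := s.erase v with hu₁def
    set u₂ := s.erase w with hu₂def
    have hu₁ : u₁ ∈ FF a m (c + 1) := mem_FF.mpr ⟨deltaM_down hs (Finset.erase_subset _ _),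
      by rw [Finset.card_erase_of_mem hvs, hsc]; omega⟩
    have hu₂ : u₂ ∈ FF a m (c + 1) := mem_FF.mpr ⟨deltaM_down hs (Finset.erase_subset _ _),
      by rw [Finset.card_erase_of_mem hws, hsc]; omega⟩
    have hne12 : u₁ ≠ u₂ := by
      intro h
      have hw1 : w ∈ u₁ := Finset.mem_erase.mpr ⟨fun hh => hvw hh.symm, hws⟩
      rw [h] at hw1
      exact (Finset.mem_erase.mp hw1).1 rfl
    have hpair : ∑ u ∈ FF a m (c + 1), bdryCoef k u t * bdryCoef k s u
        = ∑ u ∈ ({u₁, u₂} : Finset (Finset (Fin r))), bdryCoef k u t * bdryCoef k s u := by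
      apply (Finset.sum_subset ?_ ?_).symm
      · exact Finset.insert_subset hu₁ (Finset.singleton_subset_iff.mpr hu₂)
      · intro u hu hupair
        by_contra h
        rcases mul_ne_zero_iff.mp h with ⟨h1, h2⟩
        have htu := coef_subset h1
        have hus := coef_subset h2
        have hucard := (mem_FF.mp hu).2
        have hxc : (s \ u).card = 1 := by rw [Finset.card_sdiff_of_subset hus, hsc, hucard]; omega
        obtain ⟨x, hx⟩ := Finset.card_eq_one.mp hxc
        have hu_eq : u = s.erase x := by
          have h2' : s \ (s \ u) = u := Finset.sdiff_sdiff_eq_self hus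
          rw [hx] at h2'
          rw [← h2']; ext y
          simp only [Finset.mem_erase, Finset.mem_sdiff, Finset.mem_singleton]
          tauto
        have hxsd : x ∈ s \ u := by rw [hx]; exact Finset.mem_singleton_self x
        have hxt : x ∉ t := fun hxt => (Finset.mem_sdiff.mp hxsd).2 (htu hxt)
        have hxst : x ∈ s \ t := Finset.mem_sdiff.mpr ⟨(Finset.mem_sdiff.mp hxsd).1, hxt⟩
        rw [hst] at hxst
        rcases Finset.mem_insert.mp hxst with h' | h'
        · exact hupair (by rw [hu_eq, h']; exact Finset.mem_insert_self _ _)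
        · rw [Finset.mem_singleton.mp h'] at hu_eq
          exact hupair (by rw [hu_eq]; exact Finset.mem_insert_of_mem (Finset.mem_singleton_self _))
    rw [hpair, Finset.sum_pair hne12, ht_eq]
    have hd := coef_diamond (k := k) hvs hws hvw
    have sq_a2 : bdryCoef k s u₂ * bdryCoef k s u₂ = 1 := coef_sq hws
    have hwu₁ : w ∈ u₁ := Finset.mem_erase.mpr ⟨fun hh => hvw hh.symm, hws⟩
    have sq_b1 : bdryCoef k u₁ ((s.erase v).erase w) * bdryCoef k u₁ ((s.erase v).erase w) = 1 :=
      coef_sq hwu₁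
    have hcomm : (s.erase w).erase v = (s.erase v).erase w := Finset.erase_right_comm
    rw [hcomm] at hd
    linear_combination (bdryCoef k s u₂ * bdryCoef k u₁ ((s.erase v).erase w)) * hd
      - (bdryCoef k s u₁ * bdryCoef k u₁ ((s.erase v).erase w)) * sq_a2
      - (bdryCoef k s u₂ * bdryCoef k u₂ ((s.erase v).erase w)) * sq_b1
  · apply Finset.sum_eq_zero
    intro u hu
    by_contra h
    rcases mul_ne_zero_iff.mp h with ⟨h1, h2⟩
    exact hts ((coef_subset h1).trans (coef_subset h2))

lemma bdry_bdry (c : ℕ) (z : Face (deltaM a m) (c + 2) → k) :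
    bdry k (deltaM a m) c (bdry k (deltaM a m) (c + 1) z) = 0 := by
  funext t
  have h1 : ∀ u ∈ FF a m (c + 1), extCh (c + 1) (bdry k (deltaM a m) (c + 1) z) u
      = ∑ s ∈ FF a m (c + 2), bdryCoef k s u * extCh (c + 2) z s := by
    intro u hu
    have hu' := mem_FF.mp hu
    rw [show extCh (c + 1) (bdry k (deltaM a m) (c + 1) z) u
        = bdry k (deltaM a m) (c + 1) z ⟨u, hu'⟩ from dif_pos hu']
    exact bdry_apply' (c + 1) z ⟨u, hu'⟩
  rw [Pi.zero_apply, bdry_apply']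
  rw [Finset.sum_congr rfl (fun u hu => by rw [h1 u hu])]
  have h2 : ∀ u ∈ FF a m (c + 1),
      bdryCoef k u t.1 * (∑ s ∈ FF a m (c + 2), bdryCoef k s u * extCh (c + 2) z s)
      = ∑ s ∈ FF a m (c + 2), bdryCoef k u t.1 * bdryCoef k s u * extCh (c + 2) z s := by
    intro u _
    rw [Finset.mul_sum]
    exact Finset.sum_congr rfl fun s _ => by ring
  rw [Finset.sum_congr rfl h2, Finset.sum_comm]
  apply Finset.sum_eq_zero
  intro s hs
  have hs' := mem_FF.mp hs
  rw [← Finset.sum_mul]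
  rw [inner_dd hs'.1 hs'.2 t.2.2, zero_mul]


/-! ### Lattice lemmas -/

lemma mem_aSupp {i : Fin r} {u : Fin n → ℕ} : i ∈ aSupp a u ↔ a i ≤ u := by simp [aSupp]

lemma zero_mem_latticeL : (0 : Fin n → ℕ) ∈ latticeL a := ⟨∅, by simp; rfl⟩

lemma aSupp_mono {u v : Fin n → ℕ} (h : u ≤ v) : aSupp a u ⊆ aSupp a v :=
  fun i hi => mem_aSupp.mpr ((mem_aSupp.mp hi).trans h)

lemma meet_le_left {u v : Fin n → ℕ} : (aSupp a u ∩ aSupp a v).sup a ≤ u :=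
  Finset.sup_le fun i hi => mem_aSupp.mp (Finset.mem_inter.mp hi).1

lemma meet_le_right {u v : Fin n → ℕ} : (aSupp a u ∩ aSupp a v).sup a ≤ v :=
  Finset.sup_le fun i hi => mem_aSupp.mp (Finset.mem_inter.mp hi).2

lemma aSupp_meet {u v : Fin n → ℕ} :
    aSupp a ((aSupp a u ∩ aSupp a v).sup a) = aSupp a u ∩ aSupp a v := by
  apply subset_antisymm
  · intro i hi
    exact Finset.mem_inter.mpr ⟨mem_aSupp.mpr ((mem_aSupp.mp hi).trans meet_le_left),
      mem_aSupp.mpr ((mem_aSupp.mp hi).trans meet_le_right)⟩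
  · intro i hi
    exact mem_aSupp.mpr (Finset.le_sup hi)

/-! ### Rank lemmas -/

def chSet (a : Fin r → (Fin n → ℕ)) (u : Fin n → ℕ) : Set ℕ :=
  {K : ℕ | ∃ c : Fin (K + 1) → (Fin n → ℕ),
    StrictMono c ∧ (∀ j, c j ∈ latticeL a) ∧ c 0 = 0 ∧ c (Fin.last K) = u}

lemma rkOf_eq_sSup (u : Fin n → ℕ) : rkOf a u = sSup (chSet a u) := rfl

lemma chSet_bdd (u : Fin n → ℕ) : BddAbove (chSet a u) := by
  refine ⟨(Finset.Icc (0 : Fin n → ℕ) u).card, fun K hK => ?_⟩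
  obtain ⟨c, hc, _, h0, hlast⟩ := hK
  have hmem : ∀ j, c j ∈ Finset.Icc (0 : Fin n → ℕ) u := by
    intro j
    refine Finset.mem_Icc.mpr ⟨fun i => Nat.zero_le _, ?_⟩
    rw [← hlast]
    exact hc.monotone (Fin.le_last j)
  have hinj : Function.Injective (fun j : Fin (K + 1) =>
      (⟨c j, hmem j⟩ : (Finset.Icc (0 : Fin n → ℕ) u))) :=
    fun j j' h => hc.injective (congrArg Subtype.val h)
  have := Fintype.card_le_of_injective _ hinj
  rw [Fintype.card_fin, Fintype.card_coe] at this
  omega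

lemma one_mem_chSet {u : Fin n → ℕ} (hu : u ∈ latticeL a) (h0 : u ≠ 0) : 1 ∈ chSet a u := by
  refine ⟨![0, u], ?_, ?_, rfl, rfl⟩
  · have hlt : (0 : Fin n → ℕ) < u :=
      lt_of_le_of_ne (fun i => Nat.zero_le _) (Ne.symm h0)
    intro i j hij
    fin_cases i <;> fin_cases j <;>
      simp_all [Fin.lt_def]
  · intro j
    fin_cases j
    · exact zero_mem_latticeL
    · exact hu

lemma chSet_nonempty {u : Fin n → ℕ} (hu : u ∈ latticeL a) : (chSet a u).Nonempty := by
  by_cases h0 : u = 0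
  · refine ⟨0, fun _ => 0, ?_, fun _ => zero_mem_latticeL, rfl, h0.symm⟩
    intro i j hij
    exfalso
    have h1 := i.isLt
    have h2 := j.isLt
    rw [Fin.lt_def] at hij
    omega
  · exact ⟨1, one_mem_chSet hu h0⟩

lemma rk_mem {u : Fin n → ℕ} (hu : u ∈ latticeL a) : rkOf a u ∈ chSet a u :=
  Nat.sSup_mem (chSet_nonempty hu) (chSet_bdd u)

lemma rk_pos {u : Fin n → ℕ} (hu : u ∈ latticeL a) (h0 : u ≠ 0) : 1 ≤ rkOf a u :=
  le_csSup (chSet_bdd u) (one_mem_chSet hu h0)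

lemma rk_lt_rk {u w : Fin n → ℕ} (hu : u ∈ latticeL a) (hw : w ∈ latticeL a)
    (hlt : u < w) : rkOf a u < rkOf a w := by
  obtain ⟨c, hc, hL, h0, hlast⟩ := rk_mem hu
  have hmem : rkOf a u + 1 ∈ chSet a w := by
    refine ⟨Fin.snoc c w, ?_, ?_, ?_, ?_⟩
    · intro i j hij
      rcases Fin.eq_castSucc_or_eq_last j with ⟨j', rfl⟩ | rfl
      · obtain ⟨i', rfl⟩ :=
          (Fin.eq_castSucc_or_eq_last i).resolve_right
            (Fin.ne_last_of_lt (hij.trans (Fin.castSucc_lt_last j')))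
        rw [Fin.snoc_castSucc, Fin.snoc_castSucc]
        exact hc (Fin.castSucc_lt_castSucc_iff.mp hij)
      · obtain ⟨i', rfl⟩ :=
          (Fin.eq_castSucc_or_eq_last i).resolve_right (Fin.ne_last_of_lt hij)
        rw [Fin.snoc_castSucc, Fin.snoc_last]
        calc c i' ≤ c (Fin.last (rkOf a u)) := hc.monotone (Fin.le_last i')
          _ = u := hlast
          _ < w := hlt
    · intro j
      rcases Fin.eq_castSucc_or_eq_last j with ⟨j', rfl⟩ | rfl
      · rw [Fin.snoc_castSucc]; exact hL j'
      · rw [Fin.snoc_last]; exact hw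
    · rw [show (0 : Fin (rkOf a u + 2)) = Fin.castSucc 0 from rfl, Fin.snoc_castSucc]
      exact h0
    · exact Fin.snoc_last _ _
  have := le_csSup (chSet_bdd w) hmem
  rw [← rkOf_eq_sSup] at this
  omega


/-! ### Cone contraction for a simplex -/

lemma extCh_ne {c : ℕ} {z : Face (deltaM a m) c → k} {s : Finset (Fin r)}
    (h : extCh c z s ≠ 0) :
    ∃ hmem : s ∈ deltaM a m ∧ s.card = c, z ⟨s, hmem⟩ ≠ 0 := by
  by_cases hmem : s ∈ deltaM a m ∧ s.card = c
  · exact ⟨hmem, by rw [extCh, dif_pos hmem] at h; exact h⟩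
  · exact absurd (dif_neg hmem) h

lemma cone {d : ℕ} {A : Finset (Fin r)} {v0 : Fin r} (hv0 : v0 ∈ A)
    (hA : ∀ s : Finset (Fin r), s ⊆ A → s ∈ deltaM a m)
    (z : Face (deltaM a m) (d + 1) → k)
    (hz : ∀ s, z s ≠ 0 → s.1 ⊆ A)
    (hcyc : bdry k (deltaM a m) d z = 0) :
    ∃ w : Face (deltaM a m) (d + 2) → k,
      (∀ s, w s ≠ 0 → s.1 ⊆ A) ∧ bdry k (deltaM a m) (d + 1) w = z := by
  set w : Face (deltaM a m) (d + 2) → k := fun s => if hv : v0 ∈ s.1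
    then bdryCoef k s.1 (s.1.erase v0) * extCh (d + 1) z (s.1.erase v0) else 0 with hwdef
  have hw_face_supp : ∀ s : Face (deltaM a m) (d + 2), w s ≠ 0 → v0 ∈ s.1 ∧ s.1 ⊆ A := by
    intro s hs
    have hs' : (if hv : v0 ∈ s.1
        then bdryCoef k s.1 (s.1.erase v0) * extCh (d + 1) z (s.1.erase v0) else 0) ≠ 0 := hs
    by_cases hv : v0 ∈ s.1
    · rw [dif_pos hv] at hs'
      obtain ⟨hmem, hzz⟩ := extCh_ne (mul_ne_zero_iff.mp hs').2
      have hsub : s.1.erase v0 ⊆ A := hz _ hzz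
      refine ⟨hv, ?_⟩
      rw [← Finset.insert_erase hv]
      exact Finset.insert_subset hv0 hsub
    · exact absurd (dif_neg hv) hs'
  have hw_supp : ∀ s : Finset (Fin r), extCh (d + 2) w s ≠ 0 → v0 ∈ s ∧ s ⊆ A := by
    intro s hs
    obtain ⟨hmem, hws⟩ := extCh_ne hs
    exact hw_face_supp ⟨s, hmem⟩ hws
  refine ⟨w, fun s hs => (hw_face_supp s hs).2, ?_⟩
  funext t
  rw [bdry_apply']
  by_cases htA : t.1 ⊆ A
  · have hsum := sum_FF_insert (htc := t.2.2) htA hA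
      (fun s => bdryCoef k s t.1 * extCh (d + 2) w s)
      (fun s hs hne => ⟨coef_subset (mul_ne_zero_iff.mp hne).1,
        (hw_supp s (mul_ne_zero_iff.mp hne).2).2⟩)
    rw [hsum]
    beta_reduce
    by_cases hvt : v0 ∈ t.1
    -- hard case: v0 ∈ t
    · have ht' : t.1.erase v0 ∈ deltaM a m := deltaM_down t.2.1 (Finset.erase_subset _ _)
      have ht'c : (t.1.erase v0).card = d := by
        rw [Finset.card_erase_of_mem hvt, t.2.2]; omega
      have ht'A : t.1.erase v0 ⊆ A := (Finset.erase_subset _ _).trans htA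
      have hcyc' : (0 : k) = ∑ x ∈ A \ t.1.erase v0,
          bdryCoef k (insert x (t.1.erase v0)) (t.1.erase v0)
            * extCh (d + 1) z (insert x (t.1.erase v0)) := by
        have h0 : bdry k (deltaM a m) d z ⟨t.1.erase v0, ht', ht'c⟩ = 0 := by
          rw [hcyc]; rfl
        rw [bdry_apply'] at h0
        rw [← h0]
        exact (sum_FF_insert (htc := ht'c) ht'A hA
          (fun s => bdryCoef k s (t.1.erase v0) * extCh (d + 1) z s)
          (fun s hs hne => ⟨coef_subset (mul_ne_zero_iff.mp hne).1, by
            obtain ⟨hmem, hzz⟩ := extCh_ne (mul_ne_zero_iff.mp hne).2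
            exact hz _ hzz⟩))
      have hsplit : A \ t.1.erase v0 = insert v0 (A \ t.1) := by
        ext y
        by_cases hy : y = v0 <;>
          simp [hy, hv0, hvt, Finset.mem_sdiff, Finset.mem_erase, Finset.mem_insert] <;> tauto
      rw [hsplit, Finset.sum_insert (by simp [Finset.mem_sdiff, hvt])] at hcyc'
      rw [Finset.insert_erase hvt, extCh_spec] at hcyc'
      have hterm : ∀ x ∈ A \ t.1,
          bdryCoef k (insert x t.1) t.1 * extCh (d + 2) w (insert x t.1)
          = -(bdryCoef k t.1 (t.1.erase v0))
              * (bdryCoef k (insert x (t.1.erase v0)) (t.1.erase v0)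
                  * extCh (d + 1) z (insert x (t.1.erase v0))) := by
        intro x hx
        obtain ⟨hxA, hxt⟩ := Finset.mem_sdiff.mp hx
        have hxv : x ≠ v0 := fun h => hxt (h ▸ hvt)
        have hSmem : insert x t.1 ∈ deltaM a m ∧ (insert x t.1).card = d + 2 :=
          ⟨hA _ (Finset.insert_subset hxA htA),
            by rw [Finset.card_insert_of_notMem hxt, t.2.2]⟩
        have hvS : v0 ∈ insert x t.1 := Finset.mem_insert_of_mem hvt
        have h1 : extCh (d + 2) w (insert x t.1)
            = bdryCoef k (insert x t.1) ((insert x t.1).erase v0)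
              * extCh (d + 1) z ((insert x t.1).erase v0) := by
          rw [extCh, dif_pos hSmem, hwdef]
          beta_reduce
          rw [dif_pos hvS]
        have he1 : (insert x t.1).erase v0 = insert x (t.1.erase v0) :=
          Finset.erase_insert_of_ne hxv
        have he2 : (insert x t.1).erase x = t.1 := Finset.erase_insert hxt
        have hxt' : x ∉ t.1.erase v0 := fun h => hxt (Finset.mem_of_mem_erase h)
        have he3 : (insert x (t.1.erase v0)).erase x = t.1.erase v0 :=
          Finset.erase_insert hxt'
        have hd := coef_diamond (k := k) (Finset.mem_insert_self x t.1) hvS hxv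
        rw [he2, he1, he3] at hd
        rw [h1, he1]
        linear_combination (extCh (d + 1) z (insert x ((t.1).erase v0))) * hd
      rw [Finset.sum_congr rfl hterm, ← Finset.mul_sum]
      have hsq := coef_sq (k := k) hvt
      have hS : ∑ x ∈ A \ t.1,
          bdryCoef k (insert x (t.1.erase v0)) (t.1.erase v0)
            * extCh (d + 1) z (insert x (t.1.erase v0))
          = -(bdryCoef k t.1 (t.1.erase v0) * z t) := by linear_combination -hcyc'
      rw [hS]
      linear_combination (z t) * hsq
    -- easy case: v0 ∉ t
    · have hvmem : v0 ∈ A \ t.1 := Finset.mem_sdiff.mpr ⟨hv0, hvt⟩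
      rw [Finset.sum_eq_single_of_mem v0 hvmem ?h0]
      case h0 =>
        intro x hx hxv
        have hvnot : v0 ∉ insert x t.1 := by
          rw [Finset.mem_insert]
          rintro (h | h)
          · exact hxv h.symm
          · exact hvt h
        have hz0 : extCh (d + 2) w (insert x t.1) = 0 := by
          by_contra h
          exact hvnot (hw_supp _ h).1
        rw [hz0, mul_zero]
      have hSmem : insert v0 t.1 ∈ deltaM a m ∧ (insert v0 t.1).card = d + 2 :=
        ⟨hA _ (Finset.insert_subset hv0 htA),
          by rw [Finset.card_insert_of_notMem hvt, t.2.2]⟩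
      have he : (insert v0 t.1).erase v0 = t.1 := Finset.erase_insert hvt
      have h1 : extCh (d + 2) w (insert v0 t.1)
          = bdryCoef k (insert v0 t.1) t.1 * z t := by
        rw [extCh, dif_pos hSmem, hwdef]
        beta_reduce
        rw [dif_pos (Finset.mem_insert_self v0 t.1), he, extCh_spec]
      rw [h1, ← mul_assoc]
      have hsq : bdryCoef k (insert v0 t.1) t.1 * bdryCoef k (insert v0 t.1) t.1 = 1 := by
        have := coef_sq (k := k) (Finset.mem_insert_self v0 t.1)
        rwa [he] at this
      rw [hsq, one_mul]
  · have hzt : z t = 0 := by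
      by_contra h
      exact htA (hz t h)
    rw [hzt]
    apply Finset.sum_eq_zero
    intro s hs
    by_contra h
    obtain ⟨h1, h2⟩ := mul_ne_zero_iff.mp h
    exact htA ((coef_subset h1).trans (hw_supp s h2).2)


/-! ### Support of boundaries -/

lemma bdry_supp {c : ℕ} {z : Face (deltaM a m) (c + 1) → k} {P : Finset (Fin r) → Prop}
    (hdown : ∀ s t : Finset (Fin r), t ⊆ s → P s → P t)
    (hz : ∀ s, z s ≠ 0 → P s.1) :
    ∀ t, bdry k (deltaM a m) c z t ≠ 0 → P t.1 := by
  intro t ht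
  rw [bdry_apply] at ht
  obtain ⟨s, -, hs⟩ := Finset.exists_ne_zero_of_sum_ne_zero ht
  exact hdown _ _ (coef_subset (mul_ne_zero_iff.mp hs).1) (hz s (mul_ne_zero_iff.mp hs).2)

/-! ### The Mayer–Vietoris style recursion -/

lemma gen (ρ : ℕ) (W : Finset (Fin n → ℕ))
    (hW : ∀ u ∈ W, u ∈ latticeL a ∧ rkOf a u ≤ ρ ∧ ∃ u₀, covIn a u₀ m ∧ u ≤ u₀)
    (d : ℕ) (hρd : ρ ≤ d) (z : Face (deltaM a m) (d + 1) → k)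
    (hsupp : ∀ s, z s ≠ 0 → ∃ u ∈ W, s.1 ⊆ aSupp a u)
    (hcyc : bdry k (deltaM a m) d z = 0) :
    ∃ w : Face (deltaM a m) (d + 2) → k,
      (∀ s, w s ≠ 0 → ∃ u ∈ W, s.1 ⊆ aSupp a u)
        ∧ bdry k (deltaM a m) (d + 1) w = z := by
  rcases W.eq_empty_or_nonempty with rfl | ⟨u, hu⟩
  · have hz0 : z = 0 := by
      funext s; by_contra h
      obtain ⟨v, hv, -⟩ := hsupp s h
      exact absurd hv (Finset.notMem_empty v)
    exact ⟨0, fun s hs => absurd rfl hs, by rw [hz0, map_zero]⟩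
  · obtain ⟨huL, hurk, u₀, hu₀cov, huu₀⟩ := hW u hu
    have hAface : ∀ s : Finset (Fin r), s ⊆ aSupp a u → s ∈ deltaM a m := by
      intro s hs
      simp only [deltaM, Finset.mem_filter, Finset.mem_univ, true_and]
      exact ⟨u₀, hu₀cov, hs.trans (aSupp_mono huu₀)⟩
    rcases (W.erase u).eq_empty_or_nonempty with hW'e | hW'ne
    -- single facet: the simplex case
    · have hWu : ∀ v ∈ W, v = u := by
        intro v hv
        by_contra hne
        exact absurd (hW'e ▸ Finset.mem_erase.mpr ⟨hne, hv⟩) (Finset.notMem_empty v)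
      have hzA : ∀ s, z s ≠ 0 → s.1 ⊆ aSupp a u := by
        intro s hs
        obtain ⟨v, hvW, hsv⟩ := hsupp s hs
        exact (hWu v hvW) ▸ hsv
      by_cases hAe : aSupp a u = ∅
      · have hz0 : z = 0 := by
          funext s; by_contra h
          have hs0 : s.1 = ∅ := Finset.subset_empty.mp (hAe ▸ hzA s h)
          have hc := s.2.2
          rw [hs0] at hc
          simp at hc
        exact ⟨0, fun s hs => absurd rfl hs, by rw [hz0, map_zero]⟩
      · obtain ⟨v0, hv0⟩ := Finset.nonempty_iff_ne_empty.mpr hAe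
        obtain ⟨w, hw1, hw2⟩ := cone hv0 hAface z hzA hcyc
        exact ⟨w, fun s hs => ⟨u, hu, hw1 s hs⟩, hw2⟩
    · by_cases hcase : ∃ u' ∈ W.erase u, aSupp a u ⊆ aSupp a u'
      -- the facet of u is redundant
      · obtain ⟨u', hu'W, hsub⟩ := hcase
        have hsupp' : ∀ s, z s ≠ 0 → ∃ v ∈ W.erase u, s.1 ⊆ aSupp a v := by
          intro s hs
          obtain ⟨v, hvW, hsv⟩ := hsupp s hs
          by_cases hvu : v = u
          · exact ⟨u', hu'W, (hvu ▸ hsv).trans hsub⟩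
          · exact ⟨v, Finset.mem_erase.mpr ⟨hvu, hvW⟩, hsv⟩
        obtain ⟨w, hw1, hw2⟩ := gen ρ (W.erase u)
          (fun v hv => hW v (Finset.mem_of_mem_erase hv)) d hρd z hsupp' hcyc
        exact ⟨w, fun s hs => (hw1 s hs).imp
          (fun v hv => ⟨Finset.mem_of_mem_erase hv.1, hv.2⟩), hw2⟩
      -- Mayer–Vietoris case
      · push_neg at hcase
        obtain ⟨u₁, hu₁⟩ := hW'ne
        have hρ1 : 1 ≤ ρ := by
          by_contra hρ0
          have h0 : ∀ v ∈ W, v = 0 := by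
            intro v hv
            obtain ⟨hvL, hvrk, -⟩ := hW v hv
            by_contra hne
            have := rk_pos hvL hne
            omega
          have h1 := h0 u hu
          have h2 := h0 u₁ (Finset.mem_of_mem_erase hu₁)
          exact (Finset.mem_erase.mp hu₁).1 (h2.trans h1.symm)
        obtain ⟨e, rfl⟩ : ∃ e, d = e + 1 := ⟨d - 1, by omega⟩
        set y : Face (deltaM a m) (e + 2) → k :=
          fun s => if s.1 ⊆ aSupp a u then z s else 0 with hydef
        set x : Face (deltaM a m) (e + 2) → k := z - y with hxdef
        have hy_supp : ∀ s, y s ≠ 0 → s.1 ⊆ aSupp a u := by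
          intro s hs
          by_cases h : s.1 ⊆ aSupp a u
          · exact h
          · exact absurd (if_neg h) hs
        have hx_supp : ∀ s, x s ≠ 0 → (z s ≠ 0 ∧ ¬ s.1 ⊆ aSupp a u) := by
          intro s hs
          rw [hxdef, Pi.sub_apply] at hs
          by_cases h : s.1 ⊆ aSupp a u
          · exfalso
            apply hs
            have hys : y s = z s := by rw [hydef]; beta_reduce; exact if_pos h
            rw [hys, sub_self]
          · have hys : y s = 0 := by rw [hydef]; beta_reduce; exact if_neg h
            rw [hys, sub_zero] at hs
            exact ⟨hs, h⟩
        have hx_supp' : ∀ s, x s ≠ 0 → ∃ v ∈ W.erase u, s.1 ⊆ aSupp a v := by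
          intro s hs
          obtain ⟨hzs, hnsub⟩ := hx_supp s hs
          obtain ⟨v, hvW, hsv⟩ := hsupp s hzs
          have hvu : v ≠ u := fun h => hnsub (h ▸ hsv)
          exact ⟨v, Finset.mem_erase.mpr ⟨hvu, hvW⟩, hsv⟩
        set cc := bdry k (deltaM a m) (e + 1) x with hcc
        have hcx : bdry k (deltaM a m) (e + 1) y = -cc := by
          rw [hcc, hxdef, map_sub, hcyc, zero_sub, neg_neg]
        set V : Finset (Fin n → ℕ) :=
          (W.erase u).image (fun u' => ((aSupp a u ∩ aSupp a u').sup a)) with hVdef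
        have hV : ∀ v ∈ V, v ∈ latticeL a ∧ rkOf a v ≤ ρ - 1
            ∧ ∃ w₀, covIn a w₀ m ∧ v ≤ w₀ := by
          intro v hv
          obtain ⟨u', hu'W', rfl⟩ := Finset.mem_image.mp hv
          refine ⟨⟨_, rfl⟩, ?_, u₀, hu₀cov, meet_le_left.trans huu₀⟩
          have hmlt : (aSupp a u ∩ aSupp a u').sup a < u := by
            refine lt_of_le_of_ne meet_le_left ?_
            intro heq
            apply hcase u' hu'W'
            have hms := aSupp_meet (a := a) (u := u) (v := u')
            rw [heq] at hms
            intro i hi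
            exact (Finset.mem_inter.mp (hms ▸ hi)).2
          have := rk_lt_rk ⟨_, rfl⟩ huL hmlt
          omega
        have hcc_supp : ∀ t, cc t ≠ 0 → ∃ v ∈ V, t.1 ⊆ aSupp a v := by
          intro t ht
          have h1 : ∃ v ∈ W.erase u, t.1 ⊆ aSupp a v := by
            refine bdry_supp (P := fun s => ∃ v ∈ W.erase u, s ⊆ aSupp a v) ?_ hx_supp' t ?_
            · rintro s t' hts ⟨v, hvW, hsv⟩
              exact ⟨v, hvW, hts.trans hsv⟩
            · rw [← hcc]; exact ht
          have h2 : t.1 ⊆ aSupp a u := by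
            refine bdry_supp (P := fun s => s ⊆ aSupp a u) ?_ hy_supp t ?_
            · exact fun s t' hts hsv => hts.trans hsv
            · rw [hcx]
              simp only [Pi.neg_apply, ne_eq, neg_eq_zero]
              exact ht
          obtain ⟨v, hvW', hsub⟩ := h1
          refine ⟨(aSupp a u ∩ aSupp a v).sup a,
            Finset.mem_image.mpr ⟨v, hvW', rfl⟩, ?_⟩
          rw [aSupp_meet]
          exact Finset.subset_inter h2 hsub
        have hcc_cyc : bdry k (deltaM a m) e cc = 0 := by
          rw [hcc, hxdef]
          exact bdry_bdry e _
        obtain ⟨w', hw'1, hw'2⟩ := gen (ρ - 1) V hV e (by omega) cc hcc_supp hcc_cyc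
        have hw'_le_u : ∀ s, w' s ≠ 0 → s.1 ⊆ aSupp a u := by
          intro s hs
          obtain ⟨v, hvV, hsv⟩ := hw'1 s hs
          obtain ⟨u', hu'W', rfl⟩ := Finset.mem_image.mp hvV
          exact hsv.trans (aSupp_mono meet_le_left)
        have hw'_W' : ∀ s, w' s ≠ 0 → ∃ v ∈ W.erase u, s.1 ⊆ aSupp a v := by
          intro s hs
          obtain ⟨v, hvV, hsv⟩ := hw'1 s hs
          obtain ⟨u', hu'W', rfl⟩ := Finset.mem_image.mp hvV
          exact ⟨u', hu'W', hsv.trans (aSupp_mono meet_le_right)⟩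
        -- x - w' is a cycle supported on the other facets
        have hxw_supp : ∀ s, (x - w') s ≠ 0 → ∃ v ∈ W.erase u, s.1 ⊆ aSupp a v := by
          intro s hs
          rw [Pi.sub_apply] at hs
          by_cases hxs : x s = 0
          · have hws : w' s ≠ 0 := by
              intro h; rw [hxs, h, sub_zero] at hs; exact hs rfl
            exact hw'_W' s hws
          · exact hx_supp' s hxs
        have hxw_cyc : bdry k (deltaM a m) (e + 1) (x - w') = 0 := by
          rw [map_sub, hw'2, ← hcc, sub_self]
        obtain ⟨p, hp1, hp2⟩ := gen ρ (W.erase u)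
          (fun v hv => hW v (Finset.mem_of_mem_erase hv)) (e + 1) hρd (x - w')
          hxw_supp hxw_cyc
        -- y + w' is a cycle supported in the simplex of u
        have hyw_supp : ∀ s, (y + w') s ≠ 0 → s.1 ⊆ aSupp a u := by
          intro s hs
          rw [Pi.add_apply] at hs
          by_cases hys : y s = 0
          · have hws : w' s ≠ 0 := by
              intro h; rw [hys, h, add_zero] at hs; exact hs rfl
            exact hw'_le_u s hws
          · exact hy_supp s hys
        have hyw_cyc : bdry k (deltaM a m) (e + 1) (y + w') = 0 := by
          rw [map_add, hw'2, hcx, neg_add_cancel]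
        have hq : ∃ q : Face (deltaM a m) (e + 3) → k,
            (∀ s, q s ≠ 0 → s.1 ⊆ aSupp a u)
              ∧ bdry k (deltaM a m) (e + 2) q = y + w' := by
          by_cases hAe : aSupp a u = ∅
          · have hyw0 : y + w' = 0 := by
              funext s; by_contra h
              have hs0 : s.1 = ∅ := Finset.subset_empty.mp (hAe ▸ hyw_supp s h)
              have hc := s.2.2
              rw [hs0] at hc
              simp at hc
            exact ⟨0, fun s hs => absurd rfl hs, by rw [hyw0, map_zero]⟩
          · obtain ⟨v0, hv0⟩ := Finset.nonempty_iff_ne_empty.mpr hAe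
            exact cone hv0 hAface (y + w') hyw_supp hyw_cyc
        obtain ⟨q, hq1, hq2⟩ := hq
        refine ⟨p + q, ?_, ?_⟩
        · intro s hs
          rw [Pi.add_apply] at hs
          by_cases hps : p s = 0
          · have hqs : q s ≠ 0 := by
              intro h; rw [hps, h, add_zero] at hs; exact hs rfl
            exact ⟨u, hu, hq1 s hqs⟩
          · exact (hp1 s hps).imp (fun v hv => ⟨Finset.mem_of_mem_erase hv.1, hv.2⟩)
        · rw [map_add, hp2, hq2, hxdef]
          funext s
          simp only [Pi.add_apply, Pi.sub_apply]
          ring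
termination_by (ρ, W.card)
decreasing_by
  · exact Prod.Lex.right _ (Finset.card_erase_lt_of_mem hu)
  · exact Prod.Lex.left _ _ (by omega)
  · exact Prod.Lex.right _ (Finset.card_erase_lt_of_mem hu)

end Aux

/-- Let `M` be a monomial ideal (with generators encoded by their
exponent vectors `a : Fin r → (Fin n → ℕ)`, minimally generating) with lcm-lattice
`L_M`, and let `m ≠ 1` in `L_M`.  Then for all `i ≥ rk m` the reduced homology
`H̃_{i−1}(Δ_m; k)` vanishes; i.e. for every `j` with `rk m ≤ j + 1`, the cycles equal
the boundaries at the chains on cardinality-`(j+1)` faces of `Δ_m`. -/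
theorem reduced_homology_vanishes_above_rank (k : Type*) [Field k] {n r : ℕ}
    (a : Fin r → (Fin n → ℕ)) (hmin : ∀ i j, i ≠ j → ¬ a i ≤ a j)
    (m : Fin n → ℕ) (hmL : m ∈ latticeL a) (hm0 : m ≠ 0) :
    ∀ j : ℕ, rkOf a m ≤ j + 1 →
      LinearMap.ker (bdry k (deltaM a m) j)
        = LinearMap.range (bdry k (deltaM a m) (j + 1)) := by
  intro j hj
  ext z
  simp only [LinearMap.mem_ker, LinearMap.mem_range]
  constructor
  · intro hz
    set W : Finset (Fin n → ℕ) :=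
      ((Finset.univ : Finset (Finset (Fin r))).image (fun A => A.sup a)).filter
        (fun u => covIn a u m) with hWdef
    have hW : ∀ u ∈ W, u ∈ latticeL a ∧ rkOf a u ≤ rkOf a m - 1
        ∧ ∃ u₀, covIn a u₀ m ∧ u ≤ u₀ := by
      intro u hu
      have hcov : covIn a u m := (Finset.mem_filter.mp hu).2
      have huL : u ∈ latticeL a := hcov.1
      have := rk_lt_rk huL hmL hcov.2.1
      exact ⟨huL, by omega, u, hcov, le_refl u⟩
    have hsupp : ∀ s : Face (deltaM a m) (j + 1), z s ≠ 0 → ∃ u ∈ W, s.1 ⊆ aSupp a u := by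
      intro s _
      have hs := s.2.1
      simp only [deltaM, Finset.mem_filter, Finset.mem_univ, true_and] at hs
      obtain ⟨u, hcov, hsub⟩ := hs
      refine ⟨u, ?_, hsub⟩
      rw [hWdef]
      refine Finset.mem_filter.mpr ⟨?_, hcov⟩
      obtain ⟨A, rfl⟩ := hcov.1
      exact Finset.mem_image.mpr ⟨A, Finset.mem_univ A, rfl⟩
    obtain ⟨w, -, hw2⟩ := gen (rkOf a m - 1) W hW j (by omega) z hsupp hz
    exact ⟨w, hw2⟩
  · rintro ⟨w, rfl⟩
    exact bdry_bdry j w
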